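/- Let H be a traceless Hermitian d×d complex matrix with d distinct eigenvalues. Then the J-closure of {H} has real dimension exactly d − 1. -/

import Mathlib

open Matrix

/-- The traceless Jordan product `J(A,B) = (AB + BA)/2 − (Tr(AB)/d)·I`. -/
noncomputable def tracelessJordan {d : ℕ} (A B : Matrix (Fin d) (Fin d) ℂ) :
    Matrix (Fin d) (Fin d) ℂ :=
  (2⁻¹ : ℂ) • (A * B + B * A) - ((A * B).trace / (d : ℂ)) • (1 : Matrix (Fin d) (Fin d) ℂ)

/-- An `ℝ`-subspace of the `d × d` complex matrices is J-closed if it is closed under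
the traceless Jordan product. -/
def JClosed {d : ℕ} (W : Submodule ℝ (Matrix (Fin d) (Fin d) ℂ)) : Prop :=
  ∀ X ∈ W, ∀ Y ∈ W, tracelessJordan X Y ∈ W

/-- The J-closure of a set of matrices: the smallest J-closed `ℝ`-subspace
containing it. -/
noncomputable def JClosure {d : ℕ} (S : Set (Matrix (Fin d) (Fin d) ℂ)) :
    Submodule ℝ (Matrix (Fin d) (Fin d) ℂ) :=
  sInf {W | JClosed W ∧ S ⊆ W}

/-! ### Auxiliary material -/

open Polynomial in
theorem TJaux.charpoly_transpose' {d : ℕ} (M : Matrix (Fin d) (Fin d) ℂ) :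
    Mᵀ.charpoly = M.charpoly := by
  unfold Matrix.charpoly
  rw [show charmatrix Mᵀ = (charmatrix M)ᵀ from ?_, Matrix.det_transpose]
  ext i j
  by_cases h : i = j <;>
    simp [charmatrix_apply, Matrix.transpose_apply, h, Matrix.diagonal, eq_comm]

open Polynomial in
theorem TJaux.eval_charpoly' {d : ℕ} (M : Matrix (Fin d) (Fin d) ℂ) (μ : ℂ) :
    (M.charpoly).eval μ = (Matrix.diagonal (fun _ => μ) - M).det := by
  unfold Matrix.charpoly
  rw [← coe_evalRingHom, RingHom.map_det]
  congr 1
  ext i j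
  by_cases h : i = j <;> simp [charmatrix_apply, Matrix.diagonal, h]

open Polynomial in
theorem TJaux.coeff_charpoly_real {d : ℕ} {H : Matrix (Fin d) (Fin d) ℂ}
    (hH : H.IsHermitian) (k : ℕ) : ∃ r : ℝ, (H.charpoly).coeff k = (r : ℂ) := by
  have hmap : H.map (starRingEnd ℂ) = Hᵀ := by
    have h := congrArg Matrix.transpose hH.eq
    rw [Matrix.conjTranspose, Matrix.transpose_map, Matrix.transpose_transpose] at h
    ext i j
    have := congrFun (congrFun h i) j
    simpa [Matrix.map_apply] using this
  have h1 : (H.map (starRingEnd ℂ)).charpoly = H.charpoly.map (starRingEnd ℂ) :=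
    Matrix.charpoly_map H (starRingEnd ℂ)
  have h2 : H.charpoly.map (starRingEnd ℂ) = H.charpoly := by
    rw [← h1, hmap, TJaux.charpoly_transpose']
  have := congrArg (fun p => Polynomial.coeff p k) h2
  simp only [Polynomial.coeff_map] at this
  exact ⟨((H.charpoly).coeff k).re, (Complex.conj_eq_iff_re.mp this).symm⟩

theorem TJaux.trace_pow_real {d : ℕ} {H : Matrix (Fin d) (Fin d) ℂ}
    (hH : H.IsHermitian) (k : ℕ) : ∃ r : ℝ, (H ^ k).trace = (r : ℂ) := by
  have h := hH.pow k
  have hs : star ((H ^ k).trace) = (H ^ k).trace := by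
    conv_lhs => rw [← h.eq]
    rw [Matrix.trace_conjTranspose, star_star]
  exact ⟨((H ^ k).trace).re, (Complex.conj_eq_iff_re.mp hs).symm⟩

open Polynomial in
theorem TJaux.eval_eq_zero_of_aeval_eq_zero {d : ℕ} (hd : d ≠ 0)
    (H : Matrix (Fin d) (Fin d) ℂ) (p : ℂ[X]) (hp : aeval H p = 0) {μ : ℂ}
    (hμ : μ ∈ (Matrix.charpoly H).roots) : p.eval μ = 0 := by
  obtain ⟨q, hq⟩ := Polynomial.X_sub_C_dvd_sub_C_eval (a := μ) (p := p)
  have h1 := congrArg (aeval H) hq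
  rw [map_sub, _root_.map_mul, hp, map_sub, aeval_X, aeval_C, aeval_C, zero_sub] at h1
  have hdet := congrArg Matrix.det h1
  have hzero : (H - (algebraMap ℂ (Matrix (Fin d) (Fin d) ℂ)) μ).det = 0 := by
    have hroot : (Matrix.charpoly H).eval μ = 0 := Polynomial.isRoot_of_mem_roots hμ
    rw [TJaux.eval_charpoly'] at hroot
    have heq : H - (algebraMap ℂ (Matrix (Fin d) (Fin d) ℂ)) μ
        = -(Matrix.diagonal (fun _ => μ) - H) := by
      rw [Matrix.algebraMap_eq_diagonal, neg_sub]
      congr 1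
    rw [heq, Matrix.det_neg, hroot, mul_zero]
  rw [Matrix.det_mul, hzero, zero_mul, Matrix.det_neg] at hdet
  have h2 : ((algebraMap ℂ (Matrix (Fin d) (Fin d) ℂ)) (p.eval μ)).det = p.eval μ ^ d := by
    rw [Matrix.algebraMap_eq_diagonal, Matrix.det_diagonal]
    simp [Finset.prod_const]
  rw [h2] at hdet
  have hpow : p.eval μ ^ d = 0 := by
    rcases mul_eq_zero.mp hdet with h | h
    · simpa using h
    · exact h
  exact pow_eq_zero_iff hd |>.mp hpow

/-- The traceless part of `H ^ k`. -/
noncomputable def TJaux.Tm {d : ℕ} (H : Matrix (Fin d) (Fin d) ℂ) (k : ℕ) :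
    Matrix (Fin d) (Fin d) ℂ := H ^ k - ((H ^ k).trace / (d : ℂ)) • 1

open TJaux in
theorem TJaux.tracelessJordan_Tm {d : ℕ} (hd : (d : ℂ) ≠ 0)
    (H : Matrix (Fin d) (Fin d) ℂ) (a b : ℕ) :
    tracelessJordan (Tm H a) (Tm H b) =
      Tm H (a + b) - ((H ^ b).trace / (d : ℂ)) • Tm H a
        - ((H ^ a).trace / (d : ℂ)) • Tm H b := by
  have hab : H ^ a * H ^ b = H ^ (a + b) := (pow_add H a b).symm
  have hba : H ^ b * H ^ a = H ^ (a + b) := by rw [← pow_add, Nat.add_comm]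
  have htr1 : (1 : Matrix (Fin d) (Fin d) ℂ).trace = (d : ℂ) := by simp [Matrix.trace_one]
  have h5 : (d : ℂ) ^ 5 * ((d : ℂ)⁻¹) ^ 5 = 1 := by
    rw [← mul_pow, mul_inv_cancel₀ hd, one_pow]
  simp only [tracelessJordan, Tm, sub_mul, mul_sub, smul_mul_assoc, mul_smul_comm, smul_smul,
    hab, hba, mul_one, one_mul, smul_sub, Matrix.trace_sub, Matrix.trace_smul, htr1, smul_eq_mul]
  match_scalars
  · ring
  · field_simp [hd]; ring
  · field_simp [hd]; ring
  · field_simp [hd]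
    ring

theorem TJaux.tJ_symm {d : ℕ} (A B : Matrix (Fin d) (Fin d) ℂ) :
    tracelessJordan A B = tracelessJordan B A := by
  unfold tracelessJordan
  rw [add_comm (A * B), Matrix.trace_mul_comm]

theorem TJaux.real_smul_mat {d : ℕ} (x : ℝ) (M : Matrix (Fin d) (Fin d) ℂ) :
    (x : ℂ) • M = x • M := by
  rw [← Complex.coe_algebraMap, algebraMap_smul]

theorem TJaux.tJ_add_right {d : ℕ} (A B C : Matrix (Fin d) (Fin d) ℂ) :
    tracelessJordan A (B + C) = tracelessJordan A B + tracelessJordan A C := by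
  unfold tracelessJordan
  rw [mul_add, add_mul, Matrix.trace_add, add_div]
  module

theorem TJaux.tJ_smul_right {d : ℕ} (r : ℝ) (A B : Matrix (Fin d) (Fin d) ℂ) :
    tracelessJordan A (r • B) = r • tracelessJordan A B := by
  rw [← TJaux.real_smul_mat r B, ← TJaux.real_smul_mat r (tracelessJordan A B)]
  unfold tracelessJordan
  simp only [mul_smul_comm, smul_mul_assoc, ← smul_add, Matrix.trace_smul, smul_smul,
    smul_sub, smul_eq_mul, mul_div_assoc]
  match_scalars <;> ring

theorem TJaux.tJ_zero_right {d : ℕ} (A : Matrix (Fin d) (Fin d) ℂ) :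
    tracelessJordan A 0 = 0 := by
  unfold tracelessJordan
  simp

theorem JClosure_singleton_dim_eq_of_distinct_eigenvalues
    (d : ℕ) (H : Matrix (Fin d) (Fin d) ℂ)
    (hH : H.IsHermitian) (htr : H.trace = 0)
    (hdist : (Matrix.charpoly H).roots.toFinset.card = d) :
    Module.finrank ℝ (JClosure {H}) = d - 1 := by
  classical
  rcases Nat.eq_zero_or_pos d with rfl | hd1
  · haveI : Subsingleton (Matrix (Fin 0) (Fin 0) ℂ) := ⟨fun a b => by ext i; exact i.elim0⟩
    exact Module.finrank_zero_of_subsingleton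
  have hd0 : d ≠ 0 := hd1.ne'
  have hdc : (d : ℂ) ≠ 0 := Nat.cast_ne_zero.mpr hd0
  set T : ℕ → Matrix (Fin d) (Fin d) ℂ := TJaux.Tm H with hTdef
  have hT0 : T 0 = 0 := by
    simp [hTdef, TJaux.Tm, Matrix.trace_one, div_self hdc]
  have hT1 : T 1 = H := by
    simp [hTdef, TJaux.Tm, pow_one, htr]
  have hJ : ∀ a b : ℕ, tracelessJordan (T a) (T b)
      = T (a+b) - ((H^b).trace/(d:ℂ)) • T a - ((H^a).trace/(d:ℂ)) • T b :=
    fun a b => TJaux.tracelessJordan_Tm hdc H a b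
  choose c hc using fun k => TJaux.trace_pow_real hH k
  set W : Submodule ℝ (Matrix (Fin d) (Fin d) ℂ) :=
    Submodule.span ℝ (Set.range fun k : ℕ => T (k+1)) with hWdef
  have hTmemW : ∀ k : ℕ, T (k+1) ∈ W := fun k => Submodule.subset_span ⟨k, rfl⟩
  have hHW : H ∈ W := hT1 ▸ hTmemW 0
  have hsmul_mem : ∀ (W' : Submodule ℝ (Matrix (Fin d) (Fin d) ℂ)) (k : ℕ)
      (M : Matrix (Fin d) (Fin d) ℂ), M ∈ W' → (((H^k).trace/(d:ℂ)) • M) ∈ W' := by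
    intro W' k M hM
    rw [hc k, show ((c k : ℂ)/(d:ℂ)) = ((c k / d : ℝ) : ℂ) from by push_cast; ring,
      TJaux.real_smul_mat]
    exact W'.smul_mem _ hM
  have hWclosed : JClosed W := by
    have hgen : ∀ (a : ℕ), ∀ Y ∈ W, tracelessJordan (T (a+1)) Y ∈ W := by
      intro a Y hY
      induction hY using Submodule.span_induction with
      | mem x hx =>
        obtain ⟨b, rfl⟩ := hx
        rw [hJ]
        have hmem : T (a+1+(b+1)) ∈ W := by
          have h := hTmemW (a+b+1)
          rwa [show a+b+1+1 = a+1+(b+1) from by omega] at h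
        exact W.sub_mem (W.sub_mem hmem (hsmul_mem W _ _ (hTmemW a)))
          (hsmul_mem W _ _ (hTmemW b))
      | zero => rw [TJaux.tJ_zero_right]; exact W.zero_mem
      | add x y hx hy ihx ihy => rw [TJaux.tJ_add_right]; exact W.add_mem ihx ihy
      | smul r x hx ih => rw [TJaux.tJ_smul_right]; exact W.smul_mem r ih
    intro X hX Y hY
    induction hX using Submodule.span_induction with
    | mem x hx =>
      obtain ⟨a, rfl⟩ := hx
      exact hgen a Y hY
    | zero => rw [TJaux.tJ_symm, TJaux.tJ_zero_right]; exact W.zero_mem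
    | add x y hx hy ihx ihy =>
      rw [TJaux.tJ_symm, TJaux.tJ_add_right, TJaux.tJ_symm Y x, TJaux.tJ_symm Y y]
      exact W.add_mem ihx ihy
    | smul r x hx ih =>
      rw [TJaux.tJ_symm, TJaux.tJ_smul_right, TJaux.tJ_symm Y x]
      exact W.smul_mem r ih
  have hJCmem : H ∈ JClosure {H} :=
    Submodule.mem_sInf.mpr fun p hp => hp.2 rfl
  have hJCclosed : JClosed (JClosure {H}) := by
    intro X hX Y hY
    exact Submodule.mem_sInf.mpr fun p hp =>
      hp.1 X (Submodule.mem_sInf.mp hX p hp) Y (Submodule.mem_sInf.mp hY p hp)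
  have hWJC : ∀ k : ℕ, T (k+1) ∈ JClosure {H} := by
    intro k
    induction k with
    | zero => rw [show (0+1 : ℕ) = 1 from rfl, hT1]; exact hJCmem
    | succ k ih =>
      have hid := hJ (k+1) 1
      rw [hT1] at hid
      simp only [pow_one, htr, zero_div, zero_smul, sub_zero] at hid
      have heq : T (k+1+1) = tracelessJordan (T (k+1)) H + ((H^(k+1)).trace/(d:ℂ)) • H := by
        rw [hid, sub_add_cancel]
      rw [heq]
      exact Submodule.add_mem _ (hJCclosed _ ih _ hJCmem)
        (hsmul_mem (JClosure {H}) (k+1) _ hJCmem)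
  have hWeq : JClosure {H} = W :=
    le_antisymm (sInf_le ⟨hWclosed, Set.singleton_subset_iff.mpr hHW⟩)
      (Submodule.span_le.mpr (by rintro x ⟨k, rfl⟩; exact hWJC k))
  rw [hWeq]
  -- Cayley-Hamilton with the recurrence
  have hdeg : H.charpoly.natDegree = d := by
    rw [Matrix.charpoly_natDegree_eq_dim, Fintype.card_fin]
  have hCH0 := Matrix.aeval_self_charpoly H
  rw [Polynomial.aeval_eq_sum_range, hdeg] at hCH0
  have hcoeffd : H.charpoly.coeff d = 1 := by
    have h := (Matrix.charpoly_monic H).coeff_natDegree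
    rwa [hdeg] at h
  rw [Finset.sum_range_succ, hcoeffd, one_smul] at hCH0
  have hHd : H^d = ∑ i ∈ Finset.range d, (-(H.charpoly.coeff i)) • H^i := by
    rw [eq_neg_of_add_eq_zero_right hCH0]
    simp [neg_smul, Finset.sum_neg_distrib]
  have hTrec : ∀ m, d ≤ m →
      T m = ∑ i ∈ Finset.range d, (-(H.charpoly.coeff i)) • T (m - d + i) := by
    intro m hm
    have hpow : H^m = ∑ i ∈ Finset.range d, (-(H.charpoly.coeff i)) • H^(m-d+i) := by
      calc H^m = H^(m-d) * H^d := by rw [← pow_add]; congr 1; omega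
        _ = ∑ i ∈ Finset.range d, (-(H.charpoly.coeff i)) • (H^(m-d) * H^i) := by
            rw [hHd, Finset.mul_sum]; simp [mul_smul_comm]
        _ = ∑ i ∈ Finset.range d, (-(H.charpoly.coeff i)) • H^(m-d+i) := by
            simp [← pow_add]
    have htrm : (H^m).trace
        = ∑ i ∈ Finset.range d, (-(H.charpoly.coeff i)) * (H^(m-d+i)).trace := by
      rw [hpow, Matrix.trace_sum]
      simp [Matrix.trace_smul]
    show H^m - ((H^m).trace/(d:ℂ)) • 1
        = ∑ i ∈ Finset.range d, (-(H.charpoly.coeff i)) •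
            (H^(m-d+i) - ((H^(m-d+i)).trace/(d:ℂ)) • (1 : Matrix (Fin d) (Fin d) ℂ))
    rw [htrm, hpow]
    simp only [smul_sub, neg_smul, neg_mul]
    rw [Finset.sum_neg_distrib, Finset.sum_neg_distrib, neg_div, neg_smul, sub_neg_eq_add,
      Finset.sum_sub_distrib, Finset.sum_neg_distrib, Finset.sum_div, Finset.sum_smul]
    have : ∀ x ∈ Finset.range d,
        H.charpoly.coeff x • (((H ^ (m - d + x)).trace / (d:ℂ)) • (1 : Matrix (Fin d) (Fin d) ℂ))
          = (H.charpoly.coeff x * (H ^ (m - d + x)).trace / (d:ℂ)) • (1 : Matrix (Fin d) (Fin d) ℂ) := by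
      intro x _
      rw [smul_smul, mul_div_assoc]
    rw [Finset.sum_neg_distrib, sub_neg_eq_add]
    congr 1
    exact Finset.sum_congr rfl fun x hx => (this x hx).symm
  choose rc hrc using TJaux.coeff_charpoly_real hH
  set f : Fin (d-1) → Matrix (Fin d) (Fin d) ℂ := fun k => T (k.1+1) with hfdef
  have hkey : ∀ m : ℕ, T m ∈ Submodule.span ℝ (Set.range f) := by
    intro m
    induction m using Nat.strong_induction_on with
    | _ m IH =>
      rcases lt_or_ge m d with hm | hm
      · rcases Nat.eq_zero_or_pos m with rfl | h0
        · rw [hT0]; exact Submodule.zero_mem _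
        · exact Submodule.subset_span ⟨⟨m-1, by omega⟩, congrArg T (show m - 1 + 1 = m from by omega)⟩
      · rw [hTrec m hm]
        refine Submodule.sum_mem _ fun i hi => ?_
        have hi' : i < d := Finset.mem_range.mp hi
        rw [hrc i, show (-(rc i : ℂ)) = ((-(rc i) : ℝ) : ℂ) from by push_cast; ring,
          TJaux.real_smul_mat]
        exact Submodule.smul_mem _ _ (IH _ (by omega))
  have hWf : W = Submodule.span ℝ (Set.range f) :=
    le_antisymm (Submodule.span_le.mpr (by rintro x ⟨k, rfl⟩; exact hkey (k+1)))
      (Submodule.span_mono (by rintro x ⟨k, rfl⟩; exact ⟨k.1, rfl⟩))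
  rw [hWf]
  have hli : LinearIndependent ℝ f := by
    rw [Fintype.linearIndependent_iff]
    intro g hg
    set s : ℂ := ∑ k : Fin (d-1), (g k : ℂ) * ((H^(k.1+1)).trace/(d:ℂ)) with hsdef
    set p : Polynomial ℂ :=
      (∑ k : Fin (d-1), Polynomial.C ((g k : ℂ)) * Polynomial.X^(k.1+1)) - Polynomial.C s
      with hpdef
    have expand : ∀ k : Fin (d-1), g k • f k
        = (g k : ℂ) • H^(k.1+1)
          - ((g k : ℂ) * ((H^(k.1+1)).trace/(d:ℂ))) • (1 : Matrix (Fin d) (Fin d) ℂ) := by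
      intro k
      rw [← TJaux.real_smul_mat (g k) (f k)]
      show (g k : ℂ) • (H^(k.1+1) - ((H^(k.1+1)).trace/(d:ℂ)) • 1) = _
      rw [smul_sub, smul_smul]
    have h2 : (∑ k : Fin (d-1), (g k : ℂ) • H^(k.1+1)) - s • (1 : Matrix (Fin d) (Fin d) ℂ)
        = 0 := by
      rw [hsdef, Finset.sum_smul, ← Finset.sum_sub_distrib]
      rw [← hg]
      refine Finset.sum_congr rfl fun k _ => ?_
      rw [expand k]
    have haev : Polynomial.aeval H p = 0 := by
      rw [hpdef]
      simp only [map_sub, map_sum, _root_.map_mul, Polynomial.aeval_C,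
        Polynomial.aeval_X_pow, Algebra.algebraMap_eq_smul_one, smul_mul_assoc, one_mul]
      exact h2
    have hp0 : p = 0 := by
      by_contra hne
      have hsub : (Matrix.charpoly H).roots.toFinset.val ⊆ p.roots := by
        intro μ hμ
        have hμ' : μ ∈ (Matrix.charpoly H).roots := by
          rwa [← Multiset.mem_toFinset]
        exact Polynomial.mem_roots'.mpr
          ⟨hne, TJaux.eval_eq_zero_of_aeval_eq_zero hd0 H p haev hμ'⟩
      have hcard := Polynomial.card_le_degree_of_subset_roots hsub
      rw [hdist] at hcard
      have hdegp : p.natDegree ≤ d - 1 := by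
        rw [hpdef]
        refine le_trans (Polynomial.natDegree_sub_le _ _) (max_le ?_ ?_)
        · refine Polynomial.natDegree_sum_le_of_forall_le _ _ fun k _ => ?_
          refine le_trans (Polynomial.natDegree_C_mul_le _ _) ?_
          rw [Polynomial.natDegree_X_pow]
          have := k.2
          omega
        · simp [Polynomial.natDegree_C]
      omega
    intro i
    have hco := congrArg (fun q => Polynomial.coeff q (i.1+1)) hp0
    simp only [hpdef, Polynomial.coeff_sub, Polynomial.finset_sum_coeff,
      Polynomial.coeff_C_mul, Polynomial.coeff_X_pow, Polynomial.coeff_C,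
      Polynomial.coeff_zero, Nat.succ_ne_zero, if_false, sub_zero, mul_ite, mul_one,
      mul_zero] at hco
    have hcond : ∀ k : Fin (d-1), ((i:ℕ) + 1 = (k:ℕ) + 1) = (i = k) := by
      intro k
      apply propext
      constructor
      · intro h; exact Fin.ext (by omega)
      · intro h; rw [h]
    simp only [hcond] at hco
    rw [Finset.sum_ite_eq Finset.univ i (fun k => (g k : ℂ))] at hco
    simp only [Finset.mem_univ, if_true] at hco
    exact_mod_cast hco
  rw [finrank_span_eq_card hli, Fintype.card_fin]
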